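/- If f : X → ℝ is continuous and g : X → ℝ is quasicontinuous, then the pointwise sum f + g is quasicontinuous. -/
import Mathlib

/-- `h` is quasicontinuous at `x`. -/
def QuasicontinuousAt {X Y : Type*} [TopologicalSpace X] [TopologicalSpace Y]
    (h : X → Y) (x : X) : Prop :=
  ∀ V : Set Y, IsOpen V → h x ∈ V → ∀ U : Set X, IsOpen U → x ∈ U →
    ∃ W : Set X, IsOpen W ∧ W.Nonempty ∧ W ⊆ U ∧ h '' W ⊆ V

theorem quasicontinuous_add_continuous {X : Type*} [TopologicalSpace X]
    (f g : X → ℝ) (hf : Continuous f) (hg : ∀ x, QuasicontinuousAt g x) :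
    ∀ x, QuasicontinuousAt (fun y => f y + g y) x := by
  intro x V hV hxV U hU hxU
  obtain ⟨ε, hε, hball⟩ := Metric.isOpen_iff.1 hV _ hxV
  set U' := U ∩ f ⁻¹' Metric.ball (f x) (ε / 2) with hU'
  have hU'open : IsOpen U' := hU.inter (Metric.isOpen_ball.preimage hf)
  have hxU' : x ∈ U' := ⟨hxU, by simp [hε]⟩
  obtain ⟨W, hWopen, hWne, hWsub, hWim⟩ :=
    hg x (Metric.ball (g x) (ε / 2)) Metric.isOpen_ball (by simp [hε]) U' hU'open hxU'
  refine ⟨W, hWopen, hWne, hWsub.trans (Set.inter_subset_left), ?_⟩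
  rintro _ ⟨y, hy, rfl⟩
  apply hball
  have h1 : dist (f y) (f x) < ε / 2 := (hWsub hy).2
  have h2 : dist (g y) (g x) < ε / 2 := hWim ⟨y, hy, rfl⟩
  simp only [Metric.mem_ball, Real.dist_eq] at *
  have : f y + g y - (f x + g x) = (f y - f x) + (g y - g x) := by ring
  calc |f y + g y - (f x + g x)| ≤ |f y - f x| + |g y - g x| := by
        rw [this]; exact abs_add_le _ _
    _ < ε := by linarith
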